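/- arXiv:1911.06872 — 2 statements merged into one kernel-verified Lean document; each statement's English description precedes it below -/
import Mathlib

section
/- For every integer k ≥ 2 and every real ρ ≥ 1, the function y ↦ (∏_{j=0}^{k-2} (y - j) / (k-1)!)^ρ is convex on the interval [k-1, ∞). -/
open Set

private lemma prod_aux (n : ℕ) :
    ConvexOn ℝ (Set.Ici ((n : ℝ))) (fun y : ℝ => ∏ j ∈ Finset.range n, (y - (j : ℝ))) ∧
    MonotoneOn (fun y : ℝ => ∏ j ∈ Finset.range n, (y - (j : ℝ))) (Set.Ici ((n : ℝ))) ∧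
    ∀ x ∈ Set.Ici ((n : ℝ)), 0 ≤ ∏ j ∈ Finset.range n, (x - (j : ℝ)) := by
  induction n with
  | zero =>
      simp only [Finset.range_zero, Finset.prod_empty]
      exact ⟨convexOn_const 1 (convex_Ici _), monotoneOn_const, fun x _ => zero_le_one⟩
  | succ n ih =>
      obtain ⟨hc, hm, h0⟩ := ih
      have hsub : Set.Ici ((n + 1 : ℕ) : ℝ) ⊆ Set.Ici ((n : ℝ)) := by
        apply Set.Ici_subset_Ici.2; push_cast; linarith
      have hc' := hc.subset hsub (convex_Ici _)
      have hm' := hm.mono hsub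
      have h0' : ∀ x ∈ Set.Ici ((n + 1 : ℕ) : ℝ),
          0 ≤ ∏ j ∈ Finset.range n, (x - (j : ℝ)) := fun x hx => h0 x (hsub hx)
      have hgc : ConvexOn ℝ (Set.Ici ((n + 1 : ℕ) : ℝ)) (fun y : ℝ => y - (n : ℝ)) :=
        ((convexOn_id (convex_Ici _)).add (convexOn_const _ (convex_Ici _)) : _)
      have hgm : MonotoneOn (fun y : ℝ => y - (n : ℝ)) (Set.Ici ((n + 1 : ℕ) : ℝ)) :=
        fun x _ y _ hxy => by simpa using hxy
      have hg0 : ∀ x ∈ Set.Ici ((n + 1 : ℕ) : ℝ), 0 ≤ x - (n : ℝ) := by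
        intro x hx
        have : ((n + 1 : ℕ) : ℝ) ≤ x := hx
        push_cast at this; linarith
      have heq : (fun y : ℝ => ∏ j ∈ Finset.range (n + 1), (y - (j : ℝ))) =
          (fun y : ℝ => ∏ j ∈ Finset.range n, (y - (j : ℝ))) * (fun y : ℝ => y - (n : ℝ)) := by
        funext y
        simp [Finset.prod_range_succ]
      refine ⟨?_, ?_, ?_⟩
      · rw [heq]
        exact hc'.mul hgc h0' hg0 (hm'.monovaryOn hgm)
      · rw [heq]
        intro x hx y hy hxy
        exact mul_le_mul (hm' hx hy hxy) (hgm hx hy hxy) (hg0 x hx) (h0' y hy)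
      · intro x hx
        rw [Finset.prod_range_succ]
        exact mul_nonneg (h0' x hx) (hg0 x hx)

private lemma rpow_comp_aux {s : Set ℝ} {f : ℝ → ℝ} (hf : ConvexOn ℝ s f)
    (hf0 : ∀ x ∈ s, 0 ≤ f x) {ρ : ℝ} (hρ : 1 ≤ ρ) :
    ConvexOn ℝ s (fun y => f y ^ ρ) := by
  refine ⟨hf.1, fun x hx y hy a b ha hb hab => ?_⟩
  simp only [smul_eq_mul]
  have h1 : f (a * x + b * y) ^ ρ ≤ (a * f x + b * f y) ^ ρ := by
    refine Real.rpow_le_rpow (hf0 _ (hf.1 hx hy ha hb hab)) ?_ (le_trans zero_le_one hρ)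
    simpa using hf.2 hx hy ha hb hab
  refine h1.trans ?_
  have := (convexOn_rpow hρ).2 (Set.mem_Ici.2 (hf0 x hx)) (Set.mem_Ici.2 (hf0 y hy)) ha hb hab
  simpa using this

/-- For every integer `k ≥ 2` and every real `ρ ≥ 1`, the function
`y ↦ (∏_{j=0}^{k-2} (y - j) / (k-1)!)^ρ` (the real extension of the binomial
coefficient `C(y, k-1)` raised to the power `ρ`) is convex on `[k-1, ∞)`. -/
theorem binom_rpow_convex_of_one_le (k : ℕ) (hk : 2 ≤ k) (ρ : ℝ) (hρ : 1 ≤ ρ) :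
    ConvexOn ℝ (Set.Ici ((k : ℝ) - 1))
      (fun y : ℝ => ((∏ j ∈ Finset.range (k - 1), (y - (j : ℝ))) / (Nat.factorial (k - 1))) ^ ρ) := by
  have hcast : ((k : ℝ) - 1) = (((k - 1 : ℕ) : ℝ)) := by
    have : 1 ≤ k := le_trans one_le_two hk
    push_cast [Nat.cast_sub this]; ring
  obtain ⟨hc, _, h0⟩ := prod_aux (k - 1)
  rw [hcast]
  set c : ℝ := (Nat.factorial (k - 1) : ℝ) with hcdef
  have hcpos : 0 < c := by positivity
  have hdiv : ConvexOn ℝ (Set.Ici (((k - 1 : ℕ) : ℝ)))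
      (fun y : ℝ => (∏ j ∈ Finset.range (k - 1), (y - (j : ℝ))) / c) := by
    have := hc.smul (c := c⁻¹) (by positivity)
    refine this.congr ?_
    intro x _
    simp [smul_eq_mul, div_eq_inv_mul]
  exact rpow_comp_aux hdiv (fun x hx => div_nonneg (h0 x hx) hcpos.le) hρ
end

section
/- For every integer k ≥ 3 there exists ρ̲ < 1 such that for all ρ ≥ ρ̲, the function y ↦ (∏_{j=0}^{k-2}(y-j))^ρ is convex on [k-1, ∞). -/
open Finset Real Set Filter Topology


lemma cast_le_aux (k : ℕ) (hk : 3 ≤ k) {j : ℕ} (hj : j ∈ Finset.range (k - 1)) :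
    (j : ℝ) ≤ (k : ℝ) - 2 := by
  rw [Finset.mem_range] at hj
  have h : (j : ℝ) + 2 ≤ (k : ℝ) := by exact_mod_cast (by omega : j + 2 ≤ k)
  linarith

lemma key_ineq (k : ℕ) (hk : 3 ≤ k) {y : ℝ} (hy : (k : ℝ) - 1 ≤ y) :
    ∑ j ∈ Finset.range (k - 1), ((y - (j : ℝ))⁻¹) ^ 2 ≤
      (1 - (((k : ℝ) - 1) ^ 2)⁻¹) * (∑ j ∈ Finset.range (k - 1), (y - (j : ℝ))⁻¹) ^ 2 := by
  have hK : (3 : ℝ) ≤ (k : ℝ) := by exact_mod_cast hk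
  set K : ℝ := (k : ℝ) with hKdef
  have hd : (1 : ℝ) ≤ y - (K - 2) := by linarith
  have hdpos : (0 : ℝ) < y - (K - 2) := by linarith
  set m : ℝ := (y - (K - 2))⁻¹ with hmdef
  have hmpos : 0 < m := inv_pos.2 hdpos
  have hypos : (0 : ℝ) < y := by linarith
  have hpos : ∀ j ∈ Finset.range (k - 1), 0 < y - (j : ℝ) := by
    intro j hj
    have := cast_le_aux k hk hj
    linarith
  have hle : ∀ j ∈ Finset.range (k - 1), (y - (j : ℝ))⁻¹ ≤ m := by
    intro j hj
    exact inv_anti₀ hdpos (by have := cast_le_aux k hk hj; linarith)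
  set S1 : ℝ := ∑ j ∈ Finset.range (k - 1), (y - (j : ℝ))⁻¹ with hS1def
  set S2 : ℝ := ∑ j ∈ Finset.range (k - 1), ((y - (j : ℝ))⁻¹) ^ 2 with hS2def
  have hS1pos : 0 < S1 := by
    apply Finset.sum_pos (fun j hj => inv_pos.2 (hpos j hj))
    exact Finset.nonempty_range_iff.2 (by omega)
  -- S2 ≤ m * S1
  have h2 : S2 ≤ m * S1 := by
    rw [hS2def, hS1def, Finset.mul_sum]
    apply Finset.sum_le_sum
    intro j hj
    have h1 : 0 ≤ (y - (j : ℝ))⁻¹ := (inv_pos.2 (hpos j hj)).le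
    have := hle j hj
    nlinarith
  -- S1 ≤ (K-1) * m
  have h3 : S1 ≤ (K - 1) * m := by
    have : S1 ≤ ∑ _j ∈ Finset.range (k - 1), m := Finset.sum_le_sum hle
    rw [Finset.sum_const, Finset.card_range, nsmul_eq_mul] at this
    have hcard : ((k - 1 : ℕ) : ℝ) = K - 1 := by
      rw [hKdef]; push_cast [Nat.cast_sub (by omega : 1 ≤ k)]; ring
    linarith [hcard ▸ this]
  -- y⁻¹ + m ≤ S1
  have h4 : y⁻¹ + m ≤ S1 := by
    have hsub : ({0, k - 2} : Finset ℕ) ⊆ Finset.range (k - 1) := by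
      intro x hx
      simp only [Finset.mem_insert, Finset.mem_singleton] at hx
      rw [Finset.mem_range]; omega
    have hne : (0 : ℕ) ≠ k - 2 := by omega
    have hcast2 : ((k - 2 : ℕ) : ℝ) = K - 2 := by
      rw [hKdef]; push_cast [Nat.cast_sub (by omega : 2 ≤ k)]; ring
    have := Finset.sum_le_sum_of_subset_of_nonneg hsub
      (fun j hj _ => (inv_pos.2 (hpos j hj)).le)
      (f := fun j : ℕ => (y - (j : ℝ))⁻¹)
    rw [Finset.sum_pair hne] at this
    simpa [hcast2, hmdef] using this
  -- m ≤ (K-1) * y⁻¹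
  have h5 : m ≤ (K - 1) * y⁻¹ := by
    have e1 : m * (y - (K - 2)) = 1 := inv_mul_cancel₀ (ne_of_gt hdpos)
    have e2 : y⁻¹ * y = 1 := inv_mul_cancel₀ (ne_of_gt hypos)
    have hyi : 0 < y⁻¹ := inv_pos.2 hypos
    nlinarith [mul_pos hmpos hyi, mul_pos hmpos hypos]
  set c : ℝ := ((K - 1) ^ 2)⁻¹ with hcdef
  have hK1 : (0:ℝ) < (K - 1) ^ 2 := by nlinarith
  have hcpos : 0 < c := by rw [hcdef]; exact inv_pos.2 hK1
  have hcK : c * (K - 1) ^ 2 = 1 := inv_mul_cancel₀ hK1.ne'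
  have e1 : c * S1 ≤ y⁻¹ := by
    have t1 : c * S1 ≤ c * ((K - 1) * m) := by nlinarith
    have t2 : c * ((K - 1) * m) ≤ c * ((K - 1) * ((K - 1) * y⁻¹)) := by
      have h0 : 0 ≤ c * (K - 1) := by nlinarith
      nlinarith
    have t3 : c * ((K - 1) * ((K - 1) * y⁻¹)) = y⁻¹ := by
      have : c * ((K - 1) * ((K - 1) * y⁻¹)) = c * (K - 1) ^ 2 * y⁻¹ := by ring
      rw [this, hcK, one_mul]
    linarith
  have e2 : m ≤ (1 - c) * S1 := by linarith
  have e3 : m * S1 ≤ (1 - c) * S1 * S1 := mul_le_mul_of_nonneg_right e2 hS1pos.le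
  nlinarith

-- derivative facts
lemma hasDerivAt_logsum (k : ℕ) {y : ℝ}
    (hy : ∀ j ∈ Finset.range (k - 1), y - (j : ℝ) ≠ 0) :
    HasDerivAt (fun y : ℝ => ∑ j ∈ Finset.range (k - 1), Real.log (y - (j : ℝ)))
      (∑ j ∈ Finset.range (k - 1), (y - (j : ℝ))⁻¹) y := by
  apply HasDerivAt.fun_sum
  intro j hj
  have h1 : HasDerivAt (fun y : ℝ => y - (j : ℝ)) 1 y := (hasDerivAt_id y).sub_const _
  simpa [one_div] using h1.log (hy j hj)

lemma hasDerivAt_invsum (k : ℕ) {y : ℝ}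
    (hy : ∀ j ∈ Finset.range (k - 1), y - (j : ℝ) ≠ 0) :
    HasDerivAt (fun y : ℝ => ∑ j ∈ Finset.range (k - 1), (y - (j : ℝ))⁻¹)
      (-∑ j ∈ Finset.range (k - 1), ((y - (j : ℝ))⁻¹) ^ 2) y := by
  rw [← Finset.sum_neg_distrib]
  apply HasDerivAt.fun_sum
  intro j hj
  have h1 : HasDerivAt (fun y : ℝ => y - (j : ℝ)) 1 y := (hasDerivAt_id y).sub_const _
  simpa [inv_pow, neg_div, one_div] using h1.fun_inv (hy j hj)

/-- For every integer `k ≥ 3` there exists `ρ̲ < 1` such that for all `ρ ≥ ρ̲`,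
the function `y ↦ (∏_{j=0}^{k-2} (y - j))^ρ` is convex on `[k-1, ∞)`. -/
theorem binom_rpow_convex_of_lt_one (k : ℕ) (hk : 3 ≤ k) :
    ∃ ρ₀ : ℝ, ρ₀ < 1 ∧ ∀ ρ : ℝ, ρ₀ ≤ ρ →
      ConvexOn ℝ (Set.Ici ((k : ℝ) - 1))
        (fun y : ℝ => (∏ j ∈ Finset.range (k - 1), (y - (j : ℝ))) ^ ρ) := by
  have hK : (3 : ℝ) ≤ (k : ℝ) := by exact_mod_cast hk
  have hK1 : (0 : ℝ) < ((k : ℝ) - 1) ^ 2 := by nlinarith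
  have hcpos : (0 : ℝ) < (((k : ℝ) - 1) ^ 2)⁻¹ := inv_pos.2 hK1
  have hcle : (((k : ℝ) - 1) ^ 2)⁻¹ ≤ 1 / 4 := by
    have h4 : (4 : ℝ) ≤ ((k : ℝ) - 1) ^ 2 := by nlinarith
    calc (((k : ℝ) - 1) ^ 2)⁻¹ ≤ (4 : ℝ)⁻¹ := inv_anti₀ (by norm_num) h4
      _ = 1 / 4 := by norm_num
  refine ⟨1 - (((k : ℝ) - 1) ^ 2)⁻¹, by linarith, ?_⟩
  intro ρ hρ
  have hρpos : 0 < ρ := by linarith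
  set g : ℝ → ℝ :=
    fun y => Real.exp (ρ * ∑ j ∈ Finset.range (k - 1), Real.log (y - (j : ℝ))) with hgdef
  have hne : ∀ y : ℝ, (k : ℝ) - 2 < y → ∀ j ∈ Finset.range (k - 1), y - (j : ℝ) ≠ 0 := by
    intro y hy j hj
    have := cast_le_aux k hk hj
    intro h; linarith [sub_eq_zero.1 h]
  have hg : ∀ y : ℝ, (k : ℝ) - 2 < y →
      HasDerivAt g (g y * (ρ * ∑ j ∈ Finset.range (k - 1), (y - (j : ℝ))⁻¹)) y :=
    fun y hy => ((hasDerivAt_logsum k (hne y hy)).const_mul ρ).exp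
  set φ : ℝ → ℝ :=
    fun y => g y * (ρ * ∑ j ∈ Finset.range (k - 1), (y - (j : ℝ))⁻¹) with hφdef
  have hφ : ∀ y : ℝ, (k : ℝ) - 2 < y →
      HasDerivAt φ (g y * (ρ * ∑ j ∈ Finset.range (k - 1), (y - (j : ℝ))⁻¹) *
          (ρ * ∑ j ∈ Finset.range (k - 1), (y - (j : ℝ))⁻¹) +
        g y * (ρ * -∑ j ∈ Finset.range (k - 1), ((y - (j : ℝ))⁻¹) ^ 2)) y :=
    fun y hy => (hg y hy).mul ((hasDerivAt_invsum k (hne y hy)).const_mul ρ)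
  have hconv : ConvexOn ℝ (Set.Ici ((k : ℝ) - 1)) g := by
    apply convexOn_of_deriv2_nonneg (convex_Ici _)
    · intro y hy
      exact (hg y (by linarith [Set.mem_Ici.1 hy])).continuousAt.continuousWithinAt
    · rw [interior_Ici]
      intro y hy
      exact (hg y (by linarith [Set.mem_Ioi.1 hy])).differentiableAt.differentiableWithinAt
    · rw [interior_Ici]
      intro y hy
      have hy' : (k : ℝ) - 2 < y := by linarith [Set.mem_Ioi.1 hy]
      have hev : deriv g =ᶠ[𝓝 y] φ :=
        eventuallyEq_of_mem (Ioi_mem_nhds hy') (fun z hz => (hg z hz).deriv)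
      exact (hev.differentiableAt_iff.2 (hφ y hy').differentiableAt).differentiableWithinAt
    · rw [interior_Ici]
      intro y hy
      have hy1 : (k : ℝ) - 1 < y := Set.mem_Ioi.1 hy
      have hy' : (k : ℝ) - 2 < y := by linarith
      have hev : deriv g =ᶠ[𝓝 y] φ :=
        eventuallyEq_of_mem (Ioi_mem_nhds hy') (fun z hz => (hg z hz).deriv)
      have h2 : deriv^[2] g y = deriv φ y := hev.deriv_eq
      rw [h2, (hφ y hy').deriv]
      set S1 : ℝ := ∑ j ∈ Finset.range (k - 1), (y - (j : ℝ))⁻¹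
      set S2 : ℝ := ∑ j ∈ Finset.range (k - 1), ((y - (j : ℝ))⁻¹) ^ 2
      have hE : 0 < g y := Real.exp_pos _
      have hkey : S2 ≤ (1 - (((k : ℝ) - 1) ^ 2)⁻¹) * S1 ^ 2 := key_ineq k hk hy1.le
      have hS1sq : 0 ≤ S1 ^ 2 := sq_nonneg _
      have hfin : S2 ≤ ρ * S1 ^ 2 := by nlinarith
      nlinarith [mul_nonneg (mul_nonneg hE.le hρpos.le) (sub_nonneg.2 hfin)]
  apply hconv.congr
  intro y hy
  have hy1 : (k : ℝ) - 1 ≤ y := Set.mem_Ici.1 hy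
  have hpos : ∀ j ∈ Finset.range (k - 1), 0 < y - (j : ℝ) := by
    intro j hj
    have := cast_le_aux k hk hj
    linarith
  have hprod : 0 < ∏ j ∈ Finset.range (k - 1), (y - (j : ℝ)) := Finset.prod_pos hpos
  show g y = (∏ j ∈ Finset.range (k - 1), (y - (j : ℝ))) ^ ρ
  rw [Real.rpow_def_of_pos hprod, Real.log_prod (fun j hj => (hpos j hj).ne')]
  exact congrArg Real.exp (mul_comm _ _)
end
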